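/- For every prime p ≥ 5, in the ring ℤ[q] localized at polynomials coprime to [p]_q, one has ∑_{j=1}^{p-1} 1/[j]_q ≡ ((p-1)/2)(1-q) + ((p²-1)/24)(1-q)²[p]_q (mod [p]_q²). -/

import Mathlib

open Polynomial Finset

/-- `[n]_q = 1 + q + ⋯ + q^(n-1)` in `ℤ[q]`. -/
noncomputable def qnumZ (n : ℕ) : ℤ[X] := ∑ i ∈ Finset.range n, X ^ i

/-- The embedding of `ℤ[q]` into its fraction field. -/
noncomputable def ΦZ : ℤ[X] →+* FractionRing ℤ[X] := algebraMap _ _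

lemma weighted_geom {K : Type*} [Field K] (x : K) (n : ℕ) :
    (∑ k ∈ range n, (k : K) * x ^ k) * (x - 1)
      = n * x ^ n - x ^ n - (∑ k ∈ range n, x ^ k) + 1 := by
  induction n with
  | zero => simp
  | succ n ih =>
    rw [sum_range_succ, sum_range_succ, add_mul, ih]
    push_cast
    ring

lemma geom_sum_root {K : Type*} [Field K] {x : K} (hx : x ≠ 1) {n : ℕ} (h : x ^ n = 1) :
    ∑ k ∈ range n, x ^ k = 0 := by
  have h2 := geom_sum_mul x n
  rw [h, sub_self] at h2
  rcases mul_eq_zero.mp h2 with h1 | h1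
  · exact h1
  · exact absurd (sub_eq_zero.mp h1) hx

lemma weighted_root {K : Type*} [Field K] {x : K} (hx : x ≠ 1) {n : ℕ} (h : x ^ n = 1) :
    (∑ k ∈ range n, (k : K) * x ^ k) * (x - 1) = n := by
  rw [weighted_geom, geom_sum_root hx h, h]; ring

lemma gaussK {K : Type*} [Field K] (n : ℕ) :
    (∑ k ∈ range n, (k : K)) * 2 = n * (n - 1) := by
  induction n with
  | zero => simp
  | succ n ih => rw [sum_range_succ, add_mul, ih]; push_cast; ring

lemma sumsqK {K : Type*} [Field K] (n : ℕ) :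
    (∑ k ∈ range n, (k : K) ^ 2) * 6 = n * (n - 1) * (2 * n - 1) := by
  induction n with
  | zero => simp
  | succ n ih => rw [sum_range_succ, add_mul, ih]; push_cast; ring

lemma sum_div_mul_prod {F : Type*} [Field F] {ι : Type*} [DecidableEq ι] (s : Finset ι)
    (f g : ι → F) (hg : ∀ i ∈ s, g i ≠ 0) :
    (∑ i ∈ s, f i / g i) * ∏ i ∈ s, g i = ∑ i ∈ s, f i * ∏ k ∈ s.erase i, g k := by
  rw [Finset.sum_mul]
  refine sum_congr rfl fun i hi => ?_
  rw [← Finset.mul_prod_erase s g hi]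
  field_simp [hg i hi]

lemma pair_term {F : Type*} [Field F] (a b u w v : F) (ha : a ≠ 0) (hb : b ≠ 0)
    (hu : u = a + w * b) (hv : v * a = 1 - w) :
    a⁻¹ + b⁻¹ = v - u * (w / a ^ 2) + u ^ 2 * (1 / (b * a ^ 2)) := by
  have hv' : v = (1 - w) / a := by rw [eq_div_iff ha]; exact hv
  subst hu hv'
  field_simp
  ring
lemma key_sum {K : Type*} [Field K] [CharZero K] {p : ℕ} (hp : p.Prime) (h5 : 5 ≤ p)
    {ζ : K} (hζ : IsPrimitiveRoot ζ p) :
    (∑ j ∈ Icc 1 (p-1), ζ ^ j / (1 - ζ ^ j) ^ 2) * 12 = -((p : K) ^ 2 - 1) := by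
  have hppos : 0 < p := by omega
  have hp0 : (p : K) ≠ 0 := Nat.cast_ne_zero.mpr (by omega)
  have hne1 : ∀ m : ℕ, ¬ p ∣ m → ζ ^ m ≠ 1 := by
    intro m hm h
    exact hm ((hζ.pow_eq_one_iff_dvd m).mp h)
  have hpowp : ∀ m : ℕ, (ζ ^ m) ^ p = 1 := by
    intro m
    rw [← pow_mul, mul_comm, pow_mul, hζ.pow_eq_one, one_pow]
  -- the weighted sums
  set S : ℕ → K := fun j => ∑ k ∈ range p, (k : K) * (ζ ^ j) ^ k with hSdef
  have hS : ∀ j ∈ Icc 1 (p-1), S j * (ζ ^ j - 1) = p := by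
    intro j hj
    rw [mem_Icc] at hj
    exact weighted_root (hne1 j (fun hd => by have := Nat.le_of_dvd (by omega) hd; omega))
      (hpowp j)
  -- step 1 : each term equals ζ^j * (S j)^2 / p^2
  have step1 : ∀ j ∈ Icc 1 (p-1), ζ ^ j / (1 - ζ ^ j) ^ 2 = ζ ^ j * (S j) ^ 2 / (p:K) ^ 2 := by
    intro j hj
    have h := hS j hj
    have hzne : (1 : K) - ζ ^ j ≠ 0 := by
      rw [mem_Icc] at hj
      intro h0
      exact hne1 j (fun hd => by have := Nat.le_of_dvd (by omega) hd; omega)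
        (by linear_combination -h0)
    rw [div_eq_div_iff (pow_ne_zero 2 hzne) (pow_ne_zero 2 hp0)]
    linear_combination (-ζ ^ j * (S j * (ζ ^ j - 1) + (p:K))) * h
  rw [sum_congr rfl step1, ← sum_div]
  -- expand ζ^j * S j ^ 2 into double sum
  have expand : ∀ j : ℕ, ζ ^ j * S j ^ 2
      = ∑ k ∈ range p, ∑ l ∈ range p, (k : K) * l * (ζ ^ (k + l + 1)) ^ j := by
    intro j
    rw [hSdef]
    have e1 : (∑ k ∈ range p, (k:K) * (ζ^j)^k) ^ 2
        = ∑ k ∈ range p, ∑ l ∈ range p, ((k:K) * (ζ^j)^k) * ((l:K)*(ζ^j)^l) := by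
      rw [sq, Finset.sum_mul_sum]
    rw [e1, Finset.mul_sum]
    refine sum_congr rfl fun k _ => ?_
    rw [Finset.mul_sum]
    refine sum_congr rfl fun l _ => ?_
    ring
  rw [sum_congr rfl (fun j _ => expand j)]
  rw [Finset.sum_comm]
  have swap2 : ∀ k : ℕ, (∑ j ∈ Icc 1 (p-1), ∑ l ∈ range p, (k : K) * l * (ζ ^ (k + l + 1)) ^ j)
      = ∑ l ∈ range p, ∑ j ∈ Icc 1 (p-1), (k : K) * l * (ζ ^ (k + l + 1)) ^ j :=
    fun k => Finset.sum_comm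
  rw [sum_congr rfl (fun k _ => swap2 k)]
  -- inner geometric sums
  have hrange : ∀ y : K, ∑ j ∈ range p, y ^ j = y ^ 0 + ∑ j ∈ Icc 1 (p-1), y ^ j := by
    intro y
    have h1 : Icc 1 (p-1) = Finset.Ico 1 p := by
      rw [← Finset.Ico_add_one_right_eq_Icc]
      congr 1
      omega
    rw [h1, range_eq_Ico, Finset.sum_eq_sum_Ico_succ_bot hppos]
  have hgeom : ∀ m : ℕ, ∑ j ∈ range p, (ζ ^ m) ^ j = if p ∣ m then (p : K) else 0 := by
    intro m
    by_cases hd : p ∣ m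
    · rw [if_pos hd, (hζ.pow_eq_one_iff_dvd m).mpr hd]
      simp
    · rw [if_neg hd]
      exact geom_sum_root (hne1 m hd) (hpowp m)
  have hinner : ∀ m : ℕ, ∑ j ∈ Icc 1 (p-1), (ζ ^ m) ^ j
      = (if p ∣ m then (p : K) else 0) - 1 := by
    intro m
    have := hrange (ζ ^ m)
    rw [hgeom m] at this
    rw [pow_zero] at this
    linear_combination -this
  have hjsum : ∀ k l : ℕ, (∑ j ∈ Icc 1 (p-1), (k:K) * l * (ζ ^ (k + l + 1)) ^ j)
      = (k:K) * l * ((if p ∣ (k + l + 1) then (p:K) else 0) - 1) := by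
    intro k l
    rw [← Finset.mul_sum, hinner]
  rw [sum_congr rfl (fun k _ => sum_congr rfl (fun l _ => hjsum k l))]
  have hksum : ∀ k ∈ range p,
      (∑ l ∈ range p, (k:K) * l * ((if p ∣ (k + l + 1) then (p:K) else 0) - 1))
      = (k:K) * ((p - 1 - k : ℕ):K) * p - (k:K) * (∑ l ∈ range p, (l:K)) := by
    intro k hk
    rw [mem_range] at hk
    have h1 : ∑ l ∈ range p, (k:K) * l * (if p ∣ (k + l + 1) then (p:K) else 0)
        = (k:K) * ((p - 1 - k : ℕ):K) * p := by
      rw [Finset.sum_eq_single (p - 1 - k)]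
      · have he : k + (p - 1 - k) + 1 = p := by omega
        rw [he, if_pos (dvd_refl p)]
      · intro l hl hne
        rw [mem_range] at hl
        rw [if_neg, mul_zero]
        rintro ⟨c, hc⟩
        have hcase : c = 0 ∨ c = 1 ∨ 2 ≤ c := by omega
        rcases hcase with h0 | h0 | h0
        · subst h0; omega
        · subst h0; omega
        · have : p * 2 ≤ p * c := Nat.mul_le_mul_left p h0
          omega
      · intro hnot
        exact absurd (mem_range.mpr (by omega)) hnot
    have h2 : ∑ l ∈ range p, (k:K) * l * ((if p ∣ (k + l + 1) then (p:K) else 0) - 1)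
        = (∑ l ∈ range p, (k:K) * l * (if p ∣ (k + l + 1) then (p:K) else 0))
          - ∑ l ∈ range p, (k:K) * l := by
      rw [← Finset.sum_sub_distrib]
      exact sum_congr rfl fun l _ => by ring
    rw [h2, h1, ← Finset.mul_sum]
  rw [sum_congr rfl hksum, Finset.sum_sub_distrib]
  have hc : ∀ k ∈ range p, (k:K) * ((p - 1 - k : ℕ):K) * p
      = ((k:K) * ((p:K) - 1) - (k:K)^2) * p := by
    intro k hk
    rw [mem_range] at hk
    have hcast : ((p - 1 - k : ℕ):K) = (p:K) - 1 - (k:K) := by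
      rw [Nat.cast_sub (show k ≤ p - 1 by omega), Nat.cast_sub (show 1 ≤ p by omega)]
      push_cast
      ring
    rw [hcast]
    ring
  rw [sum_congr rfl hc, ← Finset.sum_mul, Finset.sum_sub_distrib, ← Finset.sum_mul,
    ← Finset.sum_mul]
  have hA := gaussK (K := K) p
  have hB := sumsqK (K := K) p
  set A := ∑ k ∈ range p, (k:K) with hAdef
  set B := ∑ k ∈ range p, (k:K)^2 with hBdef
  have hA' : A = (p:K) * ((p:K) - 1) / 2 := by
    rw [eq_div_iff (two_ne_zero)]
    exact hA
  have hB' : B = (p:K) * ((p:K) - 1) * (2 * (p:K) - 1) / 6 := by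
    rw [eq_div_iff (by norm_num : (6:K) ≠ 0)]
    exact hB
  rw [hA', hB']
  field_simp
  ring
lemma sq_mod_24 (p : ℕ) (hp : p.Prime) (h5 : 5 ≤ p) : 24 ∣ p^2 - 1 := by
  have hp2 : p % 2 = 1 := by
    rcases hp.eq_two_or_odd with h | h
    · omega
    · exact h
  have hp3 : p % 3 ≠ 0 := by
    intro h
    have h3 : (3:ℕ) ∣ p := Nat.dvd_of_mod_eq_zero h
    have := (Nat.prime_dvd_prime_iff_eq (by norm_num) hp).mp h3
    omega
  have h2 : p % 24 % 2 = 1 := by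
    rw [Nat.mod_mod_of_dvd p (by norm_num : (2:ℕ) ∣ 24)]; exact hp2
  have h3 : p % 24 % 3 ≠ 0 := by
    rw [Nat.mod_mod_of_dvd p (by norm_num : (3:ℕ) ∣ 24)]; exact hp3
  have key : ∀ r, r < 24 → r % 2 = 1 → r % 3 ≠ 0 → r^2 % 24 = 1 := by decide
  have hsq : p^2 % 24 = 1 := by
    rw [Nat.pow_mod]
    exact key _ (Nat.mod_lt _ (by norm_num)) h2 h3
  have h1 : 1 ≤ p^2 := by nlinarith
  omega

lemma qnum_dvd (p : ℕ) (hp : p.Prime) (h5 : 5 ≤ p) :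
    qnumZ p ∣ (∑ j ∈ Icc 1 (p-1), X^j * ∏ k ∈ (Icc 1 (p-1)).erase j, (qnumZ k)^2)
      + ((2 * ((p^2-1)/24) : ℕ) : ℤ[X]) * (1-X)^2 * ∏ k ∈ Icc 1 (p-1), (qnumZ k)^2 := by
  haveI := Fact.mk hp
  have h24 := sq_mod_24 p hp h5
  have h12 : 12 * (2 * ((p^2-1)/24)) = p^2 - 1 := by omega
  have hq : qnumZ p = cyclotomic p ℤ := by rw [cyclotomic_prime]; rfl
  rw [hq]
  rw [← map_dvd_map (Int.castRingHom ℚ) Int.cast_injective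
    (cyclotomic.monic p ℤ)]
  rw [map_cyclotomic_int]
  obtain ⟨ζ, hζ⟩ : ∃ ζ : ℂ, IsPrimitiveRoot ζ p :=
    ⟨_, Complex.isPrimitiveRoot_exp p (by omega)⟩
  rw [cyclotomic_eq_minpoly_rat hζ (by omega)]
  apply minpoly.dvd
  rw [← algebraMap_int_eq, aeval_map_algebraMap]
  -- now a computation in ℂ
  have haq : ∀ k : ℕ, aeval ζ (qnumZ k) = ∑ i ∈ range k, ζ ^ i := by
    intro k; simp [qnumZ]
  have hne1 : ∀ m : ℕ, ¬ p ∣ m → ζ ^ m ≠ 1 := by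
    intro m hm h
    exact hm ((hζ.pow_eq_one_iff_dvd m).mp h)
  have hA : ∀ k : ℕ, (∑ i ∈ range k, ζ ^ i) * (ζ - 1) = ζ ^ k - 1 := fun k => geom_sum_mul ζ k
  have hζne : ζ - 1 ≠ 0 := by
    intro h
    exact hne1 1 (fun hd => by have := Nat.le_of_dvd one_pos hd; omega)
      (by rw [pow_one]; linear_combination h)
  have hAne : ∀ k ∈ Icc 1 (p-1), (∑ i ∈ range k, ζ ^ i) ≠ 0 := by
    intro k hk h0
    rw [mem_Icc] at hk
    have := hA k
    rw [h0, zero_mul] at this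
    exact hne1 k (fun hd => by have := Nat.le_of_dvd (by omega) hd; omega)
      (by linear_combination -this)
  simp only [map_add, map_mul, map_sum, map_prod, map_pow, aeval_X, map_natCast, map_one,
    map_sub, haq]
  have hterm : ∀ j ∈ Icc 1 (p-1), ζ^j * ∏ k ∈ (Icc 1 (p-1)).erase j, (∑ i ∈ range k, ζ ^ i)^2
      = (∏ k ∈ Icc 1 (p-1), (∑ i ∈ range k, ζ ^ i)^2) * (ζ^j / (∑ i ∈ range j, ζ ^ i)^2) := by
    intro j hj
    have h2 := pow_ne_zero 2 (hAne j hj)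
    rw [← Finset.mul_prod_erase _ _ hj]
    field_simp
    try rw [eq_div_iff h2]
    simp [hAne j hj, h2]
  rw [sum_congr rfl hterm, ← Finset.mul_sum]
  have hAval : ∀ j ∈ Icc 1 (p-1), ζ^j / (∑ i ∈ range j, ζ ^ i)^2
      = (1-ζ)^2 * (ζ^j / (1 - ζ^j)^2) := by
    intro j hj
    have h := hA j
    have h1 : (1:ℂ) - ζ^j ≠ 0 := by
      rw [mem_Icc] at hj
      intro h0
      exact hne1 j (fun hd => by have := Nat.le_of_dvd (by omega) hd; omega)
        (by linear_combination -h0)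
    have h2 := hAne j hj
    rw [← mul_div_assoc, div_eq_div_iff (pow_ne_zero 2 h2) (pow_ne_zero 2 h1)]
    linear_combination (ζ^j * ((1-ζ^j) + (1-ζ) * (∑ i ∈ range j, ζ ^ i))) * h
  rw [sum_congr rfl hAval, ← Finset.mul_sum]
  have key := key_sum hp h5 hζ
  have hc : ((2 * ((p^2-1)/24) : ℕ) : ℂ) * 12 = (p:ℂ)^2 - 1 := by
    have h1' : 1 ≤ p^2 := by nlinarith
    have hcast : ((p^2 - 1 : ℕ) : ℂ) = (p:ℂ)^2 - 1 := by
      rw [Nat.cast_sub h1']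
      push_cast
      ring
    rw [← hcast]
    norm_cast
    omega
  set P := ∏ k ∈ Icc 1 (p-1), (∑ i ∈ range k, ζ ^ i)^2
  linear_combination (P * (1-ζ)^2/12) * key + (P * (1-ζ)^2/12) * hc

set_option maxHeartbeats 1600000 in
set_option synthInstance.maxHeartbeats 1000000 in
theorem q_wolstenholme (p : ℕ) (hp : p.Prime) (h5 : 5 ≤ p) :
    ∃ a b : ℤ[X], ¬ (qnumZ p ∣ b) ∧
      ((∑ j ∈ Finset.Icc 1 (p-1), (ΦZ (qnumZ j))⁻¹)
        - ΦZ ((((p-1)/2 : ℕ) : ℤ[X]) * (1 - X)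
            + (((p^2-1)/24 : ℕ) : ℤ[X]) * (1 - X)^2 * qnumZ p))
        * ΦZ b = ΦZ (qnumZ p ^ 2 * a) := by
  classical
  have hppos : 0 < p := by omega
  haveI := Fact.mk hp
  obtain ⟨M', hM'⟩ := qnum_dvd p hp h5
  set s : Finset ℕ := Finset.Icc 1 (p-1) with hsdef
  -- polynomial facts
  have hqp_cyc : qnumZ p = cyclotomic p ℤ := by rw [cyclotomic_prime]; rfl
  have hprime : Prime (qnumZ p) := by
    rw [hqp_cyc]; exact (cyclotomic.irreducible hppos).prime
  have hqne : ∀ n : ℕ, 1 ≤ n → qnumZ n ≠ 0 := by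
    intro n hn h0
    have he : (Polynomial.eval 1 (qnumZ n) : ℤ) = n := by simp [qnumZ]
    rw [h0] at he
    simp at he
    omega
  have hdegp : (qnumZ p).natDegree = p - 1 := by
    rw [hqp_cyc, natDegree_cyclotomic, Nat.totient_prime hp]
  have hdeg_le : ∀ n : ℕ, (qnumZ n).natDegree ≤ n - 1 := by
    intro n
    apply natDegree_sum_le_of_forall_le
    intro i hi
    rw [mem_range] at hi
    rw [natDegree_X_pow]
    omega
  have hndvd : ∀ n : ℕ, 1 ≤ n → n ≤ p - 1 → ¬ qnumZ p ∣ qnumZ n := by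
    intro n h1 h2 hd
    have hle := Polynomial.natDegree_le_of_dvd hd (hqne n h1)
    rw [hdegp] at hle
    have := hdeg_le n
    omega
  -- F-side basics
  have hinj : Function.Injective ΦZ := IsFractionRing.injective ℤ[X] (FractionRing ℤ[X])
  have hΦne : ∀ t : ℤ[X], t ≠ 0 → ΦZ t ≠ 0 := by
    intro t ht h0
    exact ht (hinj (by rw [h0, map_zero]))
  have hAne : ∀ n : ℕ, 1 ≤ n → ΦZ (qnumZ n) ≠ 0 := fun n hn => hΦne _ (hqne n hn)
  have hmem : ∀ j ∈ s, 1 ≤ j ∧ j ≤ p - 1 := by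
    intro j hj; rw [hsdef, mem_Icc] at hj; exact hj
  -- polynomial identities
  have hqadd : ∀ j ∈ s, qnumZ p = qnumZ j + X ^ j * qnumZ (p - j) := by
    intro j hj
    have h1 := hmem j hj
    have hjp : j + (p - j) = p := by omega
    calc qnumZ p = ∑ i ∈ range (j + (p - j)), (X:ℤ[X]) ^ i := by rw [hjp]; rfl
      _ = qnumZ j + X ^ j * qnumZ (p - j) := by
          rw [Finset.sum_range_add]
          unfold qnumZ
          rw [Finset.mul_sum]
          congr 1
          exact sum_congr rfl fun i _ => pow_add X j i
  have h1X : ∀ n : ℕ, (1 - X) * qnumZ n = 1 - X ^ n := by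
    intro n
    have hg := geom_sum_mul (X : ℤ[X]) n
    unfold qnumZ
    linear_combination -hg
  -- abbreviations in F
  set u := ΦZ (qnumZ p) with hudef
  set w := ΦZ (1 - X) with hwdef
  set S := ∑ j ∈ s, (ΦZ (qnumZ j))⁻¹ with hSdef
  set T := ∑ j ∈ s, (ΦZ X)^j / (ΦZ (qnumZ j))^2 with hTdef
  set E := ∑ j ∈ s, 1 / (ΦZ (qnumZ (p-j)) * (ΦZ (qnumZ j))^2) with hEdef
  have hcard : s.card = p - 1 := by rw [hsdef, Nat.card_Icc]; omega
  -- pairing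
  have hpair : ∀ j ∈ s, (ΦZ (qnumZ j))⁻¹ + (ΦZ (qnumZ (p-j)))⁻¹
      = w - u * ((ΦZ X)^j / (ΦZ (qnumZ j))^2)
        + u^2 * (1 / (ΦZ (qnumZ (p-j)) * (ΦZ (qnumZ j))^2)) := by
    intro j hj
    have h1 := hmem j hj
    apply pair_term
    · exact hAne j h1.1
    · exact hAne (p-j) (by omega)
    · rw [hudef, hqadd j hj]
      simp [map_add, map_mul, map_pow]
    · rw [hwdef, ← map_pow, ← map_mul, h1X j, map_sub, map_one, map_pow]
  -- reflection
  have hrefl : ∑ j ∈ s, (ΦZ (qnumZ (p-j)))⁻¹ = S := by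
    rw [hSdef]
    apply Finset.sum_nbij' (i := fun j => p - j) (j := fun j => p - j)
    · intro a ha; have := hmem a ha; rw [hsdef, mem_Icc]; omega
    · intro a ha; have := hmem a ha; rw [hsdef, mem_Icc]; omega
    · intro a ha; have := hmem a ha; omega
    · intro a ha; have := hmem a ha; omega
    · intro a ha; rfl
  -- the sum identity
  have hsum2 : S + S = ((p-1 : ℕ) : FractionRing ℤ[X]) * w - u * T + u^2 * E := by
    calc S + S = ∑ j ∈ s, ((ΦZ (qnumZ j))⁻¹ + (ΦZ (qnumZ (p-j)))⁻¹) := by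
          rw [Finset.sum_add_distrib, hrefl]
      _ = ∑ j ∈ s, (w - u * ((ΦZ X)^j / (ΦZ (qnumZ j))^2)
            + u^2 * (1 / (ΦZ (qnumZ (p-j)) * (ΦZ (qnumZ j))^2))) := sum_congr rfl hpair
      _ = _ := by
          rw [Finset.sum_add_distrib, Finset.sum_sub_distrib, Finset.sum_const,
            ← Finset.mul_sum, ← Finset.mul_sum, hcard, nsmul_eq_mul, ← hTdef, ← hEdef]
  -- denominators
  set D2 : ℤ[X] := ∏ k ∈ s, (qnumZ k)^2 with hD2def
  set N2 : ℤ[X] := ∑ j ∈ s, X^j * ∏ k ∈ s.erase j, (qnumZ k)^2 with hN2def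
  set D1 : ℤ[X] := ∏ j ∈ s, (qnumZ (p-j) * (qnumZ j)^2) with hD1def
  set N1 : ℤ[X] := ∑ j ∈ s, ∏ k ∈ s.erase j, (qnumZ (p-k) * (qnumZ k)^2) with hN1def
  have hT : T * ΦZ D2 = ΦZ N2 := by
    have hgen := sum_div_mul_prod s (fun j => (ΦZ X)^j) (fun j => (ΦZ (qnumZ j))^2)
      (fun i hi => pow_ne_zero 2 (hAne i (hmem i hi).1))
    rw [hTdef, hD2def, hN2def]
    simp only [map_prod, map_sum, map_mul, map_pow]
    exact hgen
  have hE : E * ΦZ D1 = ΦZ N1 := by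
    have hgen := sum_div_mul_prod s (fun j => (1 : FractionRing ℤ[X]))
      (fun j => ΦZ (qnumZ (p-j)) * (ΦZ (qnumZ j))^2)
      (fun i hi => mul_ne_zero (hAne (p-i) (by have := hmem i hi; omega))
        (pow_ne_zero 2 (hAne i (hmem i hi).1)))
    rw [hEdef, hD1def, hN1def]
    simp only [map_prod, map_sum, map_mul, map_pow]
    simpa using hgen
  -- divisibility fact mapped to F
  have h4 : ΦZ N2 + ΦZ (((2 * ((p^2-1)/24) : ℕ) : ℤ[X])) * w^2 * ΦZ D2 = u * ΦZ M' := by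
    have hc := congrArg ΦZ hM'
    simp only [map_add, map_mul, map_pow, map_sub, map_one] at hc
    rw [hwdef]
    simp only [map_sub, map_one]
    linear_combination hc
  -- the constant polynomial identity
  have hodd : p % 2 = 1 := by
    rcases hp.eq_two_or_odd with h | h
    · omega
    · exact h
  set Cpoly : ℤ[X] := (((p-1)/2 : ℕ) : ℤ[X]) * (1 - X)
      + (((p^2-1)/24 : ℕ) : ℤ[X]) * (1 - X)^2 * qnumZ p with hCdef
  have h5C : 2 * ΦZ Cpoly = ((p-1 : ℕ) : FractionRing ℤ[X]) * w
      + ΦZ (((2 * ((p^2-1)/24) : ℕ) : ℤ[X])) * w^2 * u := by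
    rw [hCdef]
    simp only [map_add, map_mul, map_pow, map_sub, map_one, map_natCast, hwdef, hudef]
    have hcast : ((p - 1 : ℕ) : FractionRing ℤ[X]) = 2 * (((p-1)/2 : ℕ) : FractionRing ℤ[X]) := by
      have h2 : (p - 1 : ℕ) = 2 * ((p-1)/2) := by omega
      calc ((p-1:ℕ) : FractionRing ℤ[X]) = ((2 * ((p-1)/2) : ℕ) : FractionRing ℤ[X]) := by
            rw [← h2]
        _ = 2 * (((p-1)/2 : ℕ) : FractionRing ℤ[X]) := by push_cast; ring
    rw [hcast]
    push_cast
    ring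
  -- non-divisibility of the denominator
  have hnd : ¬ qnumZ p ∣ (2 * (D1 * D2)) := by
    intro hd
    rcases hprime.dvd_mul.mp hd with h | h
    · have h2ne : (2 : ℤ[X]) ≠ 0 := by norm_num
      have hle := Polynomial.natDegree_le_of_dvd h h2ne
      rw [hdegp] at hle
      have : ((2 : ℤ[X])).natDegree = 0 := natDegree_ofNat 2
      omega
    rcases hprime.dvd_mul.mp h with h | h
    · rw [hD1def] at h
      rcases (hprime.dvd_finset_prod_iff _).mp h with ⟨i, hi, hdvd⟩
      rcases hprime.dvd_mul.mp hdvd with h' | h'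
      · exact hndvd (p-i) (by have := hmem i hi; omega) (by have := hmem i hi; omega) h'
      · exact hndvd i (hmem i hi).1 (hmem i hi).2 (hprime.dvd_of_dvd_pow h')
    · rw [hD2def] at h
      rcases (hprime.dvd_finset_prod_iff _).mp h with ⟨i, hi, hdvd⟩
      exact hndvd i (hmem i hi).1 (hmem i hi).2 (hprime.dvd_of_dvd_pow hdvd)
  -- conclusion
  refine ⟨N1 * D2 - M' * D1, 2 * (D1 * D2), hnd, ?_⟩
  have hb : ΦZ (2 * (D1 * D2)) = 2 * (ΦZ D1 * ΦZ D2) := by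
    rw [map_mul, map_mul, map_ofNat]
  have ha : ΦZ (qnumZ p ^ 2 * (N1 * D2 - M' * D1))
      = u^2 * (ΦZ N1 * ΦZ D2 - ΦZ M' * ΦZ D1) := by
    simp [map_mul, map_sub, map_pow, hudef]
  rw [hb, ha]
  linear_combination (ΦZ D1 * ΦZ D2) * hsum2 - (u * ΦZ D1) * hT + (u^2 * ΦZ D2) * hE
    - (u * ΦZ D1) * h4 - (ΦZ D1 * ΦZ D2) * h5C
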